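/- arXiv:1906.06665 — 3 statements merged into one kernel-verified Lean document; each statement's English description precedes it below -/
import Mathlib

section
/- Let M be a compact subset of ℝ^F, let f: M → ℝ be continuous with a unique minimizer μ₀ ∈ M, and let (Ĥ_n) be a sequence of random functions on M such that: (i) Ĥ_n(μ₀) converges in probability to f(μ₀); (ii) there exist random functions L_n with L_n ≤ Ĥ_n pointwise and sup_{μ∈M} |L_n(μ) − f(μ)| → 0 in probability. If μ̂_n ∈ argmin_{μ∈M} Ĥ_n(μ), then μ̂_n converges in probability to μ₀. -/
open MeasureTheory Filter

/-- Lower-envelope consistency theorem for extremum estimators: if the random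
criterion `Ĥ_n` converges in probability to `f(μ₀)` at the unique minimizer
`μ₀` of the continuous limit `f` on a compact set `M`, and `Ĥ_n` is bounded
below by random functions `L_n` converging uniformly in probability to `f` on
`M`, then any measurable minimizer `μ̂_n` of `Ĥ_n` over `M` converges in
probability to `μ₀`. -/
theorem extremum_estimator_consistency
    {Ω : Type*} {mΩ : MeasurableSpace Ω} (P : Measure Ω) [IsProbabilityMeasure P]
    {F : ℕ} (M : Set (EuclideanSpace ℝ (Fin F))) (hM : IsCompact M)
    (f : EuclideanSpace ℝ (Fin F) → ℝ) (hf : ContinuousOn f M)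
    (μ0 : EuclideanSpace ℝ (Fin F)) (hμ0 : μ0 ∈ M)
    (huniq : ∀ μ ∈ M, μ ≠ μ0 → f μ0 < f μ)
    (H L : ℕ → EuclideanSpace ℝ (Fin F) → Ω → ℝ)
    (hpt : ∀ δ > (0 : ℝ),
      Tendsto (fun n => P {ω | δ < |H n μ0 ω - f μ0|}) atTop (nhds 0))
    (hle : ∀ n, ∀ μ ∈ M, ∀ ω, L n μ ω ≤ H n μ ω)
    (hunif : ∀ δ > (0 : ℝ),
      Tendsto (fun n => P {ω | ∃ μ ∈ M, δ < |L n μ ω - f μ|}) atTop (nhds 0))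
    (μhat : ℕ → Ω → EuclideanSpace ℝ (Fin F))
    (hargmin : ∀ n ω, μhat n ω ∈ M ∧ ∀ μ ∈ M, H n (μhat n ω) ω ≤ H n μ ω) :
    ∀ δ > (0 : ℝ),
      Tendsto (fun n => P {ω | δ < dist (μhat n ω) μ0}) atTop (nhds 0) := by
  intro δ hδ
  set K : Set (EuclideanSpace ℝ (Fin F)) := M ∩ {μ | δ ≤ dist μ μ0} with hKdef
  have hKcl : IsClosed {μ : EuclideanSpace ℝ (Fin F) | δ ≤ dist μ μ0} :=
    isClosed_le continuous_const (continuous_id.dist continuous_const)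
  have hKcomp : IsCompact K := hM.inter_right hKcl
  rcases K.eq_empty_or_nonempty with hKe | hKne
  · have hempty : ∀ n, {ω | δ < dist (μhat n ω) μ0} = ∅ := by
      intro n
      ext ω
      simp only [Set.mem_setOf_eq, Set.mem_empty_iff_false, iff_false, not_lt]
      by_contra h
      push_neg at h
      have : μhat n ω ∈ K := ⟨(hargmin n ω).1, le_of_lt h⟩
      rw [hKe] at this
      exact absurd this (Set.notMem_empty _)
    simp only [hempty, measure_empty]
    exact tendsto_const_nhds
  · obtain ⟨μs, hμsK, hmin⟩ := hKcomp.exists_isMinOn hKne (hf.mono Set.inter_subset_left)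
    have hμsM : μs ∈ M := hμsK.1
    have hne : μs ≠ μ0 := by
      intro h
      have := hμsK.2
      rw [h] at this
      simp only [Set.mem_setOf_eq, dist_self] at this
      linarith
    have hlt : f μ0 < f μs := huniq μs hμsM hne
    set ε : ℝ := (f μs - f μ0) / 3 with hεdef
    have hε : 0 < ε := by simp only [hεdef]; linarith
    have hsub : ∀ n, {ω | δ < dist (μhat n ω) μ0} ⊆
        {ω | ε < |H n μ0 ω - f μ0|} ∪ {ω | ∃ μ ∈ M, ε < |L n μ ω - f μ|} := by
      intro n ω hω
      simp only [Set.mem_setOf_eq] at hω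
      by_contra hcon
      simp only [Set.mem_union, Set.mem_setOf_eq, not_or] at hcon
      push_neg at hcon
      obtain ⟨h1, h2⟩ := hcon
      have hmuM : μhat n ω ∈ M := (hargmin n ω).1
      have hmuK : μhat n ω ∈ K := ⟨hmuM, le_of_lt hω⟩
      have c1 : f μs ≤ f (μhat n ω) := hmin hmuK
      have c2 : f (μhat n ω) ≤ L n (μhat n ω) ω + ε := by
        have := abs_le.mp (h2 _ hmuM)
        linarith [this.2]
      have c3 : L n (μhat n ω) ω ≤ H n (μhat n ω) ω := hle n _ hmuM ω
      have c4 : H n (μhat n ω) ω ≤ H n μ0 ω := (hargmin n ω).2 μ0 hμ0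
      have c5 : H n μ0 ω ≤ f μ0 + ε := by
        have := abs_le.mp h1
        linarith [this.2]
      have : f μs ≤ f μ0 + 2 * ε := by linarith
      simp only [hεdef] at this
      linarith
    have hbound : ∀ n, P {ω | δ < dist (μhat n ω) μ0} ≤
        P {ω | ε < |H n μ0 ω - f μ0|} + P {ω | ∃ μ ∈ M, ε < |L n μ ω - f μ|} :=
      fun n => le_trans (measure_mono (hsub n)) (measure_union_le _ _)
    have hA := hpt ε hε
    have hB := hunif ε hε
    have hAB : Tendsto (fun n => P {ω | ε < |H n μ0 ω - f μ0|}
        + P {ω | ∃ μ ∈ M, ε < |L n μ ω - f μ|}) atTop (nhds 0) := by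
      simpa using hA.add hB
    exact tendsto_of_tendsto_of_tendsto_of_le_of_le tendsto_const_nhds hAB
      (fun n => zero_le) hbound
end

section
/- In the one-factor model y_{it} = λ_t + ε_{it} (i = 0,...,J) with λ_t i.i.d. N(0,σ_λ²) and ε_{it} i.i.d. N(0,σ²), all independent, if the OLS coefficient vector b of regressing y₀ on (y₁,...,y_J) over T₀ periods satisfies b'b → c/(1−c) in probability where J/T₀ → c ∈ [0,1), and ∑_i b_i → 1 in probability, then for a post-treatment period t with errors independent of the estimation sample, the estimator α̂ = y₀ₜ − α₀ₜ_adjusted satisfies: conditional on b, ε_{0t} − ε_t'b ∼ N(0, σ²(1 + b'b)), and hence ε_{0t} − ε_t'b converges in distribution to N(0, σ²/(1−c)). -/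
open MeasureTheory ProbabilityTheory Filter Finset

lemma my_gauss_scale (f : ℝ → ℝ) (hf : Continuous f) (v : NNReal) :
    ∫ x, f x ∂(gaussianReal 0 v) = ∫ x, f (Real.sqrt v * x) ∂(gaussianReal 0 1) := by
  have h : (gaussianReal 0 1).map (fun x => Real.sqrt v * x) = gaussianReal 0 v := by
    have h2 := gaussianReal_map_const_mul (μ := 0) (v := 1) (Real.sqrt v)
    have h3 : (⟨(Real.sqrt v) ^ 2, sq_nonneg _⟩ : NNReal) * 1 = v := by
      rw [mul_one]
      ext
      exact Real.sq_sqrt v.coe_nonneg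
    rw [mul_zero] at h2
    rw [h2]
    exact congrArg (gaussianReal 0) h3
  rw [← h, integral_map (by fun_prop) hf.aestronglyMeasurable]

lemma my_cont_param (f : ℝ → ℝ) (hf : Continuous f) (Cf : ℝ) (hCf : ∀ x, |f x| ≤ Cf) :
    Continuous (fun t : ℝ => ∫ x, f (t * x) ∂(gaussianReal 0 1)) := by
  rw [continuous_iff_continuousAt]
  intro t₀
  apply continuousAt_of_dominated (bound := fun _ => Cf)
  · exact Filter.Eventually.of_forall fun t =>
      (hf.comp (continuous_const.mul continuous_id)).aestronglyMeasurable
  · exact Filter.Eventually.of_forall fun t =>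
      Filter.Eventually.of_forall fun x => by simpa [Real.norm_eq_abs] using hCf (t * x)
  · exact integrable_const Cf
  · exact Filter.Eventually.of_forall fun x =>
      ((hf.comp (continuous_id.mul continuous_const)).continuousAt)

lemma my_sqrt_max (r : ℝ) : Real.sqrt (max r 0) = Real.sqrt r := by
  rcases le_total 0 r with h | h
  · rw [max_eq_left h]
  · rw [max_eq_right h, Real.sqrt_zero]; exact (Real.sqrt_eq_zero'.mpr h).symm

lemma my_tendsto_integral {Ω : Type*} {mΩ : MeasurableSpace Ω} (P : Measure Ω)
    [IsProbabilityMeasure P]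
    (S : ℕ → Ω → ℝ) (hS : ∀ n, AEMeasurable (S n) P) (L : ℝ)
    (hprob : ∀ δ > (0:ℝ), Tendsto (fun n => P {ω | δ < |S n ω - L|}) atTop (nhds 0))
    (g : ℝ → ℝ) (hg : Continuous g) (C : ℝ) (hC : ∀ x, |g x| ≤ C) :
    Tendsto (fun n => ∫ ω, g (S n ω) ∂P) atTop (nhds (g L)) := by
  have hTIM : TendstoInMeasure P S atTop (fun _ => L) := by
    rw [tendstoInMeasure_iff_dist]
    intro ε hε
    have hsub : ∀ n, P {ω | ε ≤ dist (S n ω) L} ≤ P {ω | ε/2 < |S n ω - L|} := by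
      intro n
      apply measure_mono
      intro ω hω
      simp only [Set.mem_setOf_eq, Real.dist_eq] at *
      linarith
    exact tendsto_of_tendsto_of_tendsto_of_le_of_le tendsto_const_nhds
      (hprob (ε/2) (by linarith)) (fun n => zero_le) hsub
  apply Filter.tendsto_of_subseq_tendsto
  intro ns hns
  have hTIM2 : TendstoInMeasure P (fun k => S (ns k)) atTop (fun _ => L) := by
    intro ε hε
    exact (hTIM ε hε).comp hns
  obtain ⟨ms, hms, hae⟩ := hTIM2.exists_seq_tendsto_ae
  refine ⟨ms, ?_⟩
  have hgoal : Tendsto (fun k => ∫ ω, g (S (ns (ms k)) ω) ∂P) atTop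
      (nhds (∫ _ω, g L ∂P)) := by
    apply tendsto_integral_of_dominated_convergence (fun _ => C)
    · exact fun k => (hg.measurable.comp_aemeasurable (hS _)).aestronglyMeasurable
    · exact integrable_const C
    · exact fun k => Filter.Eventually.of_forall fun ω => by
        simpa [Real.norm_eq_abs] using hC (S (ns (ms k)) ω)
    · filter_upwards [hae] with ω hω
      exact (hg.continuousAt).tendsto.comp hω
  simpa using hgoal

/-- In the one-factor model with i.i.d. Gaussian errors, if the OLS weights `b`
satisfy `b'b → c/(1−c)` and `∑ᵢ bᵢ → 1` in probability, then (conditionally on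
`b`, i.e., for each fixed weight vector `v`) `ε₀ₜ − ε_t'v ∼ N(0, σ²(1 + v'v))`,
and `ε₀ₜ − ε_t'b` converges in distribution to `N(0, σ²/(1−c))`. -/
theorem ols_post_treatment_asymptotic_distribution
    {Ω : Type*} {mΩ : MeasurableSpace Ω} (P : Measure Ω) [IsProbabilityMeasure P]
    (σ2 : NNReal) (c : ℝ) (hc0 : 0 ≤ c) (hc1 : c < 1)
    (J : ℕ → ℕ)
    (b : (n : ℕ) → Ω → Fin (J n) → ℝ)
    (ε0 : Ω → ℝ) (ε : (n : ℕ) → Ω → Fin (J n) → ℝ)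
    (hmeas0 : Measurable ε0)
    (hmease : ∀ n, Measurable (ε n))
    (hmeasb : ∀ n, Measurable (b n))
    -- joint Gaussianity: every linear combination of (ε₀, ε_n) is Gaussian
    -- with the variance corresponding to i.i.d. N(0, σ²) coordinates
    (hgauss : ∀ (n : ℕ) (a : ℝ) (v : Fin (J n) → ℝ),
      P.map (fun ω => a * ε0 ω + ∑ j, v j * ε n ω j)
        = gaussianReal 0 (Real.toNNReal ((a ^ 2 + ∑ j, (v j) ^ 2) * (σ2 : ℝ))))
    -- (ε₀, ε_n) is independent of b_n
    (hindep : ∀ n, IndepFun (fun ω => (ε0 ω, ε n ω)) (b n) P)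
    (hb1 : ∀ δ > (0 : ℝ),
      Tendsto (fun n => P {ω | δ < |(∑ j, b n ω j) - 1|}) atTop (nhds 0))
    (hb2 : ∀ δ > (0 : ℝ),
      Tendsto (fun n => P {ω | δ < |(∑ j, (b n ω j) ^ 2) - c / (1 - c)|})
        atTop (nhds 0)) :
    (∀ (n : ℕ) (v : Fin (J n) → ℝ),
      P.map (fun ω => ε0 ω - ∑ j, v j * ε n ω j)
        = gaussianReal 0 (Real.toNNReal ((1 + ∑ j, (v j) ^ 2) * (σ2 : ℝ)))) ∧
      (∀ f : ℝ → ℝ, Continuous f → (∃ Cf, ∀ x, |f x| ≤ Cf) →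
        Tendsto
          (fun n => ∫ ω, f (ε0 ω - ∑ j, b n ω j * ε n ω j) ∂P)
          atTop
          (nhds (∫ x, f x ∂(gaussianReal 0 (Real.toNNReal ((σ2 : ℝ) / (1 - c))))))) := by
  have key : ∀ (n : ℕ) (v : Fin (J n) → ℝ),
      P.map (fun ω => ε0 ω - ∑ j, v j * ε n ω j)
        = gaussianReal 0 (Real.toNNReal ((1 + ∑ j, (v j) ^ 2) * (σ2 : ℝ))) := by
    intro n v
    have h := hgauss n 1 (fun j => -v j)
    have hfun : (fun ω => 1 * ε0 ω + ∑ j, (-v j) * ε n ω j)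
        = fun ω => ε0 ω - ∑ j, v j * ε n ω j := by
      funext ω
      simp [neg_mul, Finset.sum_neg_distrib, sub_eq_add_neg]
    have hvar : ((1:ℝ))^2 + ∑ j, (-v j)^2 = 1 + ∑ j, (v j)^2 := by simp
    rw [hfun, hvar] at h
    exact h
  refine ⟨key, ?_⟩
  rintro f hf ⟨Cf, hCf⟩
  have hCf0 : 0 ≤ Cf := le_trans (abs_nonneg _) (hCf 0)
  set G : ℝ → ℝ := fun s => ∫ x, f x ∂(gaussianReal 0 (Real.toNNReal ((1 + s) * (σ2:ℝ))))
    with hG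
  have hGrep : G = fun s => ∫ x, f (Real.sqrt ((1 + s) * (σ2:ℝ)) * x) ∂(gaussianReal 0 1) := by
    funext s
    simp only [hG]
    rw [my_gauss_scale f hf]
    congr 2
    rw [Real.coe_toNNReal', my_sqrt_max]
  have hGcont : Continuous G := by
    rw [hGrep]
    exact (my_cont_param f hf Cf hCf).comp
      (Real.continuous_sqrt.comp ((continuous_const.add continuous_id).mul continuous_const))
  have hGbound : ∀ s, |G s| ≤ Cf := by
    intro s
    simp only [hG]
    have h1 : ‖∫ x, f x ∂(gaussianReal 0 (Real.toNNReal ((1 + s) * (σ2:ℝ))))‖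
        ≤ ∫ _x, Cf ∂(gaussianReal 0 (Real.toNNReal ((1 + s) * (σ2:ℝ)))) :=
      norm_integral_le_of_norm_le (integrable_const Cf)
        (Filter.Eventually.of_forall fun x => by simpa [Real.norm_eq_abs] using hCf x)
    simpa [Real.norm_eq_abs] using h1
  have hstep : ∀ n, ∫ ω, f (ε0 ω - ∑ j, b n ω j * ε n ω j) ∂P
      = ∫ ω, G (∑ j, (b n ω j)^2) ∂P := by
    intro n
    set X : Ω → ℝ × (Fin (J n) → ℝ) := fun ω => (ε0 ω, ε n ω) with hX
    have hXm : Measurable X := hmeas0.prodMk (hmease n)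
    have hmap : P.map (fun ω => (X ω, b n ω)) = (P.map X).prod (P.map (b n)) :=
      (indepFun_iff_map_prod_eq_prod_map_map hXm.aemeasurable
        (hmeasb n).aemeasurable).mp (hindep n)
    set F : (ℝ × (Fin (J n) → ℝ)) × (Fin (J n) → ℝ) → ℝ :=
      fun p => f (p.1.1 - ∑ j, p.2 j * p.1.2 j) with hF
    have hFc : Continuous F := by
      apply hf.comp
      exact (continuous_fst.comp continuous_fst).sub
        (continuous_finset_sum _ fun j _ =>
          ((continuous_apply j).comp continuous_snd).mul
            ((continuous_apply j).comp (continuous_snd.comp continuous_fst)))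
    have hFint : Integrable F ((P.map X).prod (P.map (b n))) := by
      haveI : IsProbabilityMeasure (P.map X) := Measure.isProbabilityMeasure_map hXm.aemeasurable
      haveI : IsProbabilityMeasure (P.map (b n)) :=
        Measure.isProbabilityMeasure_map (hmeasb n).aemeasurable
      refine Integrable.mono' (integrable_const Cf) hFc.aestronglyMeasurable ?_
      exact Filter.Eventually.of_forall fun p => by simpa [Real.norm_eq_abs] using hCf _
    have hGm : Continuous fun y : Fin (J n) → ℝ => G (∑ j, (y j)^2) :=
      hGcont.comp (continuous_finset_sum _ fun j _ => (continuous_apply j).pow 2)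
    calc ∫ ω, f (ε0 ω - ∑ j, b n ω j * ε n ω j) ∂P
        = ∫ ω, F (X ω, b n ω) ∂P := rfl
      _ = ∫ z, F z ∂(P.map (fun ω => (X ω, b n ω))) :=
          (integral_map (hXm.prodMk (hmeasb n)).aemeasurable
            hFc.aestronglyMeasurable).symm
      _ = ∫ z, F z ∂((P.map X).prod (P.map (b n))) := by rw [hmap]
      _ = ∫ y, ∫ x, F (x, y) ∂(P.map X) ∂(P.map (b n)) := integral_prod_symm F hFint
      _ = ∫ y, G (∑ j, (y j)^2) ∂(P.map (b n)) := by
          refine integral_congr_ae (Filter.Eventually.of_forall fun y => ?_)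
          show ∫ x, F (x, y) ∂(P.map X) = G (∑ j, (y j)^2)
          have hφc : Continuous fun x : ℝ × (Fin (J n) → ℝ) => F (x, y) :=
            hFc.comp (continuous_id.prodMk continuous_const)
          have hsumm : Measurable fun ω => ε0 ω - ∑ j, y j * ε n ω j :=
            hmeas0.sub (Finset.measurable_sum _ fun j _ =>
              ((measurable_pi_apply j).comp (hmease n)).const_mul (y j))
          have e1 : ∫ x, F (x, y) ∂(P.map X)
              = ∫ ω, f (ε0 ω - ∑ j, y j * ε n ω j) ∂P := by
            rw [integral_map hXm.aemeasurable hφc.aestronglyMeasurable]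
          have e2 : ∫ ω, f (ε0 ω - ∑ j, y j * ε n ω j) ∂P
              = ∫ t, f t ∂(P.map (fun ω => ε0 ω - ∑ j, y j * ε n ω j)) :=
            (integral_map hsumm.aemeasurable hf.aestronglyMeasurable).symm
          rw [e1, e2, key n y]
      _ = ∫ ω, G (∑ j, (b n ω j)^2) ∂P :=
          integral_map (hmeasb n).aemeasurable hGm.aestronglyMeasurable
  have hfinal : G (c / (1 - c)) = ∫ x, f x ∂(gaussianReal 0 (Real.toNNReal ((σ2:ℝ)/(1-c)))) := by
    simp only [hG]
    have hcc : (1 + c/(1-c)) * (σ2:ℝ) = (σ2:ℝ)/(1-c) := by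
      have h1 : (1:ℝ) - c ≠ 0 := by linarith
      field_simp
      ring
    rw [hcc]
  have hmeasS : ∀ n, AEMeasurable (fun ω => ∑ j, (b n ω j)^2) P := fun n =>
    (Finset.measurable_sum _ fun j _ =>
      ((measurable_pi_apply j).comp (hmeasb n)).pow_const 2).aemeasurable
  have hlim := my_tendsto_integral P (fun n ω => ∑ j, (b n ω j)^2) hmeasS
    (c/(1-c)) hb2 G hGcont Cf hGbound
  rw [hfinal] at hlim
  exact hlim.congr fun n => (hstep n).symm
end

section
/- Let ε_t = (ε_{1t},...,ε_{Jt})', t = 1,...,T₀, with the ε_{it} mean-zero, independent across i, satisfying min_{1≤i≤J} T₀^{-1}∑_t ε_{it}² ≥ c > 0 with probability 1−o(1) and max_{i≠j} |T₀^{-1}∑_t ε_{it}ε_{jt}| = o_p(1). If ŵ is a (random) sequence of vectors in the simplex Δ^{J-1} such that T₀^{-1}∑_{t=1}^{T₀} (ε_t'ŵ)² → 0 in probability, then ‖ŵ‖₂ → 0 in probability. -/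
open MeasureTheory ProbabilityTheory Filter Finset

lemma key_alg {n m : ℕ} (e : Fin n → Fin m → ℝ) (w : Fin n → ℝ)
    (hw0 : ∀ i, 0 ≤ w i) (hw1 : ∑ i, w i = 1) (c d : ℝ) (hd : 0 ≤ d)
    (hA : ∀ i, c ≤ (m : ℝ)⁻¹ * ∑ t, (e i t) ^ 2)
    (hB : ∀ i j, i ≠ j → |(m : ℝ)⁻¹ * ∑ t, e i t * e j t| ≤ d) :
    c * ∑ i, (w i) ^ 2 ≤ (m : ℝ)⁻¹ * ∑ t, (∑ i, e i t * w i) ^ 2 + d := by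
  set B : Fin n → Fin n → ℝ := fun i j => (m : ℝ)⁻¹ * ∑ t, e i t * e j t with hBdef
  have expand : (m : ℝ)⁻¹ * ∑ t, (∑ i, e i t * w i) ^ 2
      = ∑ i, ∑ j, w i * w j * B i j := by
    simp_rw [hBdef, sq, Finset.sum_mul_sum, Finset.mul_sum]
    rw [Finset.sum_comm]
    refine Finset.sum_congr rfl fun i _ => ?_
    rw [Finset.sum_comm]
    refine Finset.sum_congr rfl fun j _ => ?_
    refine Finset.sum_congr rfl fun t _ => ?_
    ring
  have h1 : ∀ i j, (-(d * (w i * w j)) + (if i = j then (c + d) * w i ^ 2 else 0))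
      ≤ w i * w j * B i j := by
    intro i j
    by_cases hij : i = j
    · subst hij
      simp only [if_pos rfl, if_true]
      have hBii : c ≤ B i i := by
        have := hA i
        simpa [hBdef, sq] using this
      have hsq : w i * w i = w i ^ 2 := (sq (w i)).symm
      nlinarith [sq_nonneg (w i), mul_le_mul_of_nonneg_left hBii (sq_nonneg (w i))]
    · simp only [if_neg hij]
      have hww : 0 ≤ w i * w j := mul_nonneg (hw0 i) (hw0 j)
      have hlb : -d ≤ B i j := (abs_le.mp (hB i j hij)).1
      nlinarith [mul_le_mul_of_nonneg_left hlb hww]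
  have hsum : -(d * 1) + (c + d) * ∑ i, (w i) ^ 2 ≤ ∑ i, ∑ j, w i * w j * B i j := by
    have := Finset.sum_le_sum (fun i (_ : i ∈ Finset.univ) =>
      Finset.sum_le_sum (fun j (_ : j ∈ Finset.univ) => h1 i j))
    have lhs_eq : ∑ i, ∑ j, (-(d * (w i * w j)) + (if i = j then (c + d) * w i ^ 2 else 0))
        = -(d * 1) + (c + d) * ∑ i, (w i) ^ 2 := by
      have hsq : (∑ i, w i) * (∑ j, w j) = ∑ i, ∑ j, w i * w j := Finset.sum_mul_sum _ _ _ _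
      have e1 : ∑ x : Fin n, ∑ y : Fin n, d * (w x * w y) = d * 1 := by
        simp_rw [← Finset.mul_sum]
        rw [← Finset.sum_mul, hw1]; ring
      have e2 : ∑ x : Fin n, ∑ y : Fin n, (if x = y then (c + d) * w x ^ 2 else 0)
          = (c + d) * ∑ i, (w i) ^ 2 := by
        simp [Finset.sum_ite_eq, Finset.mul_sum]
      simp_rw [Finset.sum_add_distrib, Finset.sum_neg_distrib]
      rw [e1, e2]
    linarith [lhs_eq ▸ this]
  rw [expand]
  have hsq : 0 ≤ ∑ i, (w i) ^ 2 := Finset.sum_nonneg fun i _ => sq_nonneg _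
  nlinarith

/-- If the idiosyncratic shocks are mean zero and independent across units, the
minimum time-average of squared shocks is bounded below by `c > 0` with
probability `1 − o(1)`, the maximum cross-product average is `o_p(1)`, and
simplex weights `ŵ` satisfy `T₀⁻¹∑_t (ε_t'ŵ)² → 0` in probability, then
`‖ŵ‖₂ → 0` in probability. -/
theorem simplex_weights_norm_tendsto_zero
    {Ω : Type*} {mΩ : MeasurableSpace Ω} (P : Measure Ω) [IsProbabilityMeasure P]
    (J : ℕ → ℕ) (c : ℝ) (hc : 0 < c)
    (eps : (T : ℕ) → Fin (J T) → Fin T → Ω → ℝ)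
    (hmeas : ∀ T i t, Measurable (eps T i t))
    (hmean : ∀ T i t, ∫ ω, eps T i t ω ∂P = 0)
    (hindep : ∀ T,
      iIndepFun
        (fun (i : Fin (J T)) (ω : Ω) => fun t : Fin T => eps T i t ω) P)
    (hmin : Tendsto
      (fun T : ℕ => P {ω | ∀ i : Fin (J T), c ≤ (T : ℝ)⁻¹ * ∑ t, (eps T i t ω) ^ 2})
      atTop (nhds 1))
    (hcross : ∀ δ > (0 : ℝ),
      Tendsto
        (fun T : ℕ => P {ω | ∃ i j : Fin (J T), i ≠ j ∧
          δ < |(T : ℝ)⁻¹ * ∑ t, eps T i t ω * eps T j t ω|})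
        atTop (nhds 0))
    (w : (T : ℕ) → Ω → Fin (J T) → ℝ)
    (hw : ∀ T ω, (∀ i, 0 ≤ w T ω i) ∧ ∑ i, w T ω i = 1)
    (hfit : ∀ δ > (0 : ℝ),
      Tendsto
        (fun T : ℕ => P {ω | δ < (T : ℝ)⁻¹ * ∑ t, (∑ i, eps T i t ω * w T ω i) ^ 2})
        atTop (nhds 0)) :
    ∀ δ > (0 : ℝ),
      Tendsto (fun T : ℕ => P {ω | δ < Real.sqrt (∑ i, (w T ω i) ^ 2)})
        atTop (nhds 0) := by
  intro δ hδ
  set d : ℝ := c * δ ^ 2 / 2 with hdd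
  have hd : 0 < d := by positivity
  have hincl : ∀ T : ℕ, {ω | δ < Real.sqrt (∑ i, (w T ω i) ^ 2)} ⊆
      ({ω | ∀ i : Fin (J T), c ≤ (T : ℝ)⁻¹ * ∑ t, (eps T i t ω) ^ 2})ᶜ ∪
      {ω | ∃ i j : Fin (J T), i ≠ j ∧
          d < |(T : ℝ)⁻¹ * ∑ t, eps T i t ω * eps T j t ω|} ∪
      {ω | d < (T : ℝ)⁻¹ * ∑ t, (∑ i, eps T i t ω * w T ω i) ^ 2} := by
    intro T ω hω
    simp only [Set.mem_setOf_eq] at hω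
    by_contra hcon
    simp only [Set.mem_union, Set.mem_compl_iff, Set.mem_setOf_eq, not_or] at hcon
    obtain ⟨⟨hA, hB⟩, hQ⟩ := hcon
    push_neg at hA hB hQ
    have key := key_alg (fun i t => eps T i t ω) (w T ω) (hw T ω).1 (hw T ω).2 c d hd.le
      hA (fun i j hij => hB i j hij)
    have h2 : ∑ i, (w T ω i) ^ 2 ≤ δ ^ 2 := by
      rw [hdd] at key hQ
      nlinarith
    have h3 : Real.sqrt (∑ i, (w T ω i) ^ 2) ≤ δ := by
      rw [show δ = Real.sqrt (δ ^ 2) by rw [Real.sqrt_sq hδ.le]]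
      exact Real.sqrt_le_sqrt h2
    linarith
  have hb : ∀ T : ℕ, P {ω | δ < Real.sqrt (∑ i, (w T ω i) ^ 2)} ≤
      P (({ω | ∀ i : Fin (J T), c ≤ (T : ℝ)⁻¹ * ∑ t, (eps T i t ω) ^ 2})ᶜ) +
      P {ω | ∃ i j : Fin (J T), i ≠ j ∧
          d < |(T : ℝ)⁻¹ * ∑ t, eps T i t ω * eps T j t ω|} +
      P {ω | d < (T : ℝ)⁻¹ * ∑ t, (∑ i, eps T i t ω * w T ω i) ^ 2} :=
    fun T => (measure_mono (hincl T)).trans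
      ((measure_union_le _ _).trans (add_le_add (measure_union_le _ _) le_rfl))
  have meas : ∀ T : ℕ, MeasurableSet
      {ω | ∀ i : Fin (J T), c ≤ (T : ℝ)⁻¹ * ∑ t, (eps T i t ω) ^ 2} := by
    intro T
    have : {ω | ∀ i : Fin (J T), c ≤ (T : ℝ)⁻¹ * ∑ t, (eps T i t ω) ^ 2}
        = ⋂ i : Fin (J T), {ω | c ≤ (T : ℝ)⁻¹ * ∑ t, (eps T i t ω) ^ 2} := by
      ext ω; simp
    rw [this]
    refine MeasurableSet.iInter fun i => measurableSet_le measurable_const ?_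
    exact (Finset.univ.measurable_sum fun t _ => (hmeas T i t).pow_const 2).const_mul _
  have hcompl : Tendsto (fun T : ℕ =>
      P (({ω | ∀ i : Fin (J T), c ≤ (T : ℝ)⁻¹ * ∑ t, (eps T i t ω) ^ 2})ᶜ))
      atTop (nhds 0) := by
    have : ∀ T : ℕ, P (({ω | ∀ i : Fin (J T), c ≤ (T : ℝ)⁻¹ * ∑ t, (eps T i t ω) ^ 2})ᶜ)
        = 1 - P {ω | ∀ i : Fin (J T), c ≤ (T : ℝ)⁻¹ * ∑ t, (eps T i t ω) ^ 2} :=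
      fun T => prob_compl_eq_one_sub (meas T)
    simp_rw [this]
    have := ENNReal.Tendsto.sub (tendsto_const_nhds (x := (1 : ENNReal))) hmin
      (Or.inl ENNReal.one_ne_top)
    simpa using this
  have hsum0 : Tendsto (fun T : ℕ =>
      P (({ω | ∀ i : Fin (J T), c ≤ (T : ℝ)⁻¹ * ∑ t, (eps T i t ω) ^ 2})ᶜ) +
      P {ω | ∃ i j : Fin (J T), i ≠ j ∧
          d < |(T : ℝ)⁻¹ * ∑ t, eps T i t ω * eps T j t ω|} +
      P {ω | d < (T : ℝ)⁻¹ * ∑ t, (∑ i, eps T i t ω * w T ω i) ^ 2})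
      atTop (nhds 0) := by
    simpa using (hcompl.add (hcross d hd)).add (hfit d hd)
  exact tendsto_of_tendsto_of_tendsto_of_le_of_le tendsto_const_nhds hsum0
    (fun T => zero_le) hb
end
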